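/- Let d ≥ 1, let rˡ, rᵇ, r^{1,b}, …, r^{d,b}, β₁, …, β_d be real numbers with rˡ ≤ rᵇ and rᵇ ≤ r^{i,b} for every i, and let Bᵇ ∈ ℝ. Define gʰ(x,y,a) := Σ_{i=1}^d βᵢaᵢ − x·rᵇBᵇ − Σ_{i=1}^d r^{i,b}aᵢ⁺ + rˡ·(y + xBᵇ + Σ_{i=1}^d aᵢ⁻)⁺ − rᵇ·(y + xBᵇ + Σ_{i=1}^d aᵢ⁻)⁻ and g̃ᶜ(y,a) := Σ_{i=1}^d βᵢaᵢ + Σ_{i=1}^d r^{i,b}(−aᵢ)⁺ + rˡ·y − rˡ·Σ_{i=1}^d (−aᵢ)⁻. Then for every y ≤ 0, every x ∈ ℝ and every a ∈ ℝᵈ: gʰ(x,y,a) ≤ g̃ᶜ(y,a). -/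
import Mathlib


/-- Driver comparison from the proof of Theorem `special contract pricing 1`:
for `y ≤ 0`, `gʰ(x,y,a) ≤ g̃ᶜ(y,a)`. -/
theorem stmt_7 (d : ℕ) (hd : 1 ≤ d) (rl rb : ℝ) (rib β : Fin d → ℝ) (Bb : ℝ)
    (hlb : rl ≤ rb) (hib : ∀ i, rb ≤ rib i)
    (gh : ℝ → ℝ → (Fin d → ℝ) → ℝ)
    (hgh : ∀ x y a, gh x y a = (∑ i, β i * a i) - x * rb * Bb
      - (∑ i, rib i * max (a i) 0)
      + rl * max (y + x * Bb + ∑ i, max (-(a i)) 0) 0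
      - rb * max (-(y + x * Bb + ∑ i, max (-(a i)) 0)) 0)
    (gtc : ℝ → (Fin d → ℝ) → ℝ)
    (hgtc : ∀ y a, gtc y a = (∑ i, β i * a i) + (∑ i, rib i * max (-(a i)) 0)
      + rl * y - rl * ∑ i, max (a i) 0)
    (y : ℝ) (hy : y ≤ 0) (x : ℝ) (a : Fin d → ℝ) :
    gh x y a ≤ gtc y a := by
  rw [hgh, hgtc]
  set S : ℝ := ∑ i, max (-(a i)) 0 with hSdef
  set P : ℝ := ∑ i, max (a i) 0 with hPdef
  have hS : 0 ≤ S := Finset.sum_nonneg fun i _ => le_max_right _ _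
  have hA : rl * P ≤ ∑ i, rib i * max (a i) 0 := by
    rw [hPdef, Finset.mul_sum]
    exact Finset.sum_le_sum fun i _ =>
      mul_le_mul_of_nonneg_right (hlb.trans (hib i)) (le_max_right _ _)
  have hB : rb * S ≤ ∑ i, rib i * max (-(a i)) 0 := by
    rw [hSdef, Finset.mul_sum]
    exact Finset.sum_le_sum fun i _ =>
      mul_le_mul_of_nonneg_right (hib i) (le_max_right _ _)
  set w : ℝ := y + x * Bb + S with hwdef
  rcases le_or_gt 0 w with hw | hw
  · rw [max_eq_left hw, max_eq_right (by linarith)]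
    have hxs : 0 ≤ x * Bb + S := by
      have := hwdef; linarith
    rw [hwdef]
    nlinarith [mul_nonneg (sub_nonneg.mpr hlb) hxs]
  · rw [max_eq_right hw.le, max_eq_left (by linarith)]
    rw [hwdef]
    nlinarith [mul_nonpos_of_nonneg_of_nonpos (sub_nonneg.mpr hlb) hy]
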